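/- Let F be a finite field of cardinality p^ℓ, 0 ≤ h < ℓ, and λ ∈ F^× with λ^{1+p^h} ≠ 1. Then a linear code C ⊆ Fⁿ × Fⁿ is a Galois p^h-self-dual 2-quasi λ-constacyclic code if and only if C has generating matrix (Eₙ, αEₙ) for some α ∈ F^× with α^{1+p^h} = −1. -/

import Mathlib

/-- The `λ`-constacyclic shift on `Fⁿ`. -/
def cshift {F : Type*} [Field F] {n : ℕ} [NeZero n] (lam : F) (a : Fin n → F) :
    Fin n → F :=
  fun i => (if i = 0 then lam else 1) * a (i - 1)

/-- The Galois inner product `⟨a,b⟩ = ∑ aᵢ bᵢ^e` on `Fⁿ × Fⁿ`, where `e = p^h`. -/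
def gin {F : Type*} [Field F] {n : ℕ} (e : ℕ)
    (a b : (Fin n → F) × (Fin n → F)) : F :=
  (∑ i, a.1 i * b.1 i ^ e) + (∑ i, a.2 i * b.2 i ^ e)

lemma cshift_smul {F : Type*} [Field F] {n : ℕ} [NeZero n] (lam α : F) (u : Fin n → F) :
    cshift lam (α • u) = α • cshift lam u := by
  funext i
  simp only [cshift, Pi.smul_apply, smul_eq_mul]
  ring

lemma sum_cshift {F : Type*} [Field F] {n : ℕ} [NeZero n] (lam : F) (e : ℕ)
    (u v : Fin n → F) :
    (∑ i, cshift lam u i * cshift lam v i ^ e)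
      = (∑ i, u i * v i ^ e) + (lam ^ (1 + e) - 1) * (u (-1) * v (-1) ^ e) := by
  have h1 : ∀ i : Fin n, cshift lam u i * cshift lam v i ^ e
      = (if i = 0 then lam ^ (1 + e) else 1) * (u (i - 1) * v (i - 1) ^ e) := by
    intro i
    by_cases hi : i = 0 <;> simp [cshift, hi, mul_pow, pow_add] <;> ring
  rw [Finset.sum_congr rfl fun i _ => h1 i]
  rw [show (∑ i : Fin n, (if i = 0 then lam ^ (1 + e) else 1) * (u (i - 1) * v (i - 1) ^ e))
      = ∑ j : Fin n, (if j = -1 then lam ^ (1 + e) else 1) * (u j * v j ^ e) from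
    (Fintype.sum_equiv (Equiv.addRight (1 : Fin n)) _ _ (by
      intro j
      simp only [Equiv.coe_addRight, add_sub_cancel_right]
      congr 1
      by_cases hj : j = -1
      · simp [hj]
      · rw [if_neg hj]; refine (if_neg ?_).symm
        intro hj0
        exact hj (eq_neg_of_add_eq_zero_left hj0))).symm]
  have h2 : ∀ j : Fin n, (if j = -1 then lam ^ (1 + e) else 1) * (u j * v j ^ e)
      = u j * v j ^ e + (if j = (-1 : Fin n) then (lam ^ (1 + e) - 1) * (u (-1) * v (-1) ^ e) else 0) := by
    intro j
    by_cases hj : j = -1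
    · subst hj; simp; ring
    · simp [hj]
  rw [Finset.sum_congr rfl fun j _ => h2 j, Finset.sum_add_distrib,
    Finset.sum_ite_eq' Finset.univ (-1 : Fin n)]
  simp

open Fin.NatCast Fin.CommRing in
lemma cshift_iter_neg_one {F : Type*} [Field F] {n : ℕ} [NeZero n] (lam : F) :
    ∀ j : ℕ, j < n → ∀ u : Fin n → F, (cshift lam)^[j] u (-1) = u (-1 - (j : Fin n)) := by
  intro j
  induction j with
  | zero => intro _ u; simp
  | succ j ih =>
    intro hj u
    rw [Function.iterate_succ_apply, ih (Nat.lt_of_succ_lt hj)]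
    have hne : (-1 : Fin n) - (j : Fin n) ≠ 0 := by
      intro h0
      have : ((j + 1 : ℕ) : Fin n) = 0 := by
        push_cast
        rw [show ((j : Fin n) + 1) = -(-1 - (j : Fin n)) by ring, h0]; simp
      rw [Fin.natCast_eq_zero] at this
      exact absurd (Nat.le_of_dvd (Nat.succ_pos j) this) (not_le.mpr hj)
    rw [cshift, if_neg hne]
    rw [one_mul]
    congr 1
    push_cast
    ring

open Fin.NatCast Fin.CommRing in
theorem stmt_9 {F : Type*} [Field F] [Fintype F] {p ℓ h n : ℕ} [NeZero n]
    (hp : p.Prime) (hcard : Fintype.card F = p ^ ℓ) (hh : h < ℓ)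
    (lam : F) (hlam : lam ≠ 0) (hlam1 : lam ^ (1 + p ^ h) ≠ 1)
    (C : Submodule F ((Fin n → F) × (Fin n → F))) :
    ((∀ c ∈ C, (cshift lam c.1, cshift lam c.2) ∈ C) ∧
      (C : Set ((Fin n → F) × (Fin n → F))) = {a | ∀ c ∈ C, gin (p ^ h) c a = 0}) ↔
    ∃ α : F, α ≠ 0 ∧ α ^ (1 + p ^ h) = -1 ∧
      ∀ x, x ∈ C ↔ ∃ u : Fin n → F, x = (u, α • u) := by
  set e := p ^ h with he
  -- Characteristic facts
  haveI hfact : Fact p.Prime := ⟨hp⟩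
  haveI hchar : CharP F p := by
    set q := ringChar F with hq
    haveI : CharP F q := ringChar.charP F
    obtain ⟨m, hqp, hcard'⟩ := FiniteField.card F q
    have hdvd : q ∣ p ^ ℓ := by
      rw [← hcard, hcard']
      exact dvd_pow_self q (by positivity)
    have : q = p := ((Nat.prime_dvd_prime_iff_eq hqp hp).mp (hqp.dvd_of_dvd_pow hdvd))
    rw [← this]; exact ringChar.charP F
  have hepos : e ≠ 0 := (pow_pos hp.pos h).ne'
  have hinj : ∀ x y : F, x ^ e = y ^ e → x = y := by
    intro x y hxy
    have hsub : (x - y) ^ e = 0 := by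
      rw [he, sub_pow_char_pow, ← he, hxy, sub_self]
    have := pow_eq_zero_iff hepos |>.mp hsub
    exact sub_eq_zero.mp this
  -- key computation: gin of two graph elements vanishes
  have hkey : ∀ α : F, α ^ (1 + e) = -1 → ∀ v u : Fin n → F,
      gin e (v, α • v) (u, α • u) = 0 := by
    intro α hα v u
    have : ∀ i : Fin n, (α • v) i * ((α • u) i) ^ e = -(v i * u i ^ e) := by
      intro i
      simp only [Pi.smul_apply, smul_eq_mul, mul_pow]
      calc α * v i * (α ^ e * u i ^ e) = α ^ (1 + e) * (v i * u i ^ e) := by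
            rw [pow_add, pow_one]; ring
        _ = -(v i * u i ^ e) := by rw [hα]; ring
    simp only [gin]
    rw [Finset.sum_congr rfl fun i _ => this i, Finset.sum_neg_distrib]
    ring
  constructor
  · rintro ⟨hT, hD⟩
    have hmem : ∀ x, x ∈ C ↔ ∀ c ∈ C, gin e c x = 0 := by
      intro x
      constructor
      · intro hx c hc
        have : x ∈ (C : Set ((Fin n → F) × (Fin n → F))) := hx
        rw [hD] at this; exact this c hc
      · intro hx
        have : x ∈ {a | ∀ c ∈ C, gin e c a = 0} := hx
        rw [← hD] at this; exact this
    have horth : ∀ c ∈ C, ∀ a ∈ C, gin e c a = 0 := by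
      intro c hc a ha
      exact (hmem a).mp ha c hc
    -- step B
    have hB : ∀ c ∈ C, ∀ a ∈ C,
        c.1 (-1) * a.1 (-1) ^ e + c.2 (-1) * a.2 (-1) ^ e = 0 := by
      intro c hc a ha
      have h1 := horth _ (hT c hc) _ (hT a ha)
      simp only [gin] at h1
      rw [sum_cshift, sum_cshift] at h1
      have h2 := horth c hc a ha
      simp only [gin] at h2
      have hne : lam ^ (1 + e) - 1 ≠ 0 := sub_ne_zero.mpr hlam1
      have : (lam ^ (1 + e) - 1) *
          (c.1 (-1) * a.1 (-1) ^ e + c.2 (-1) * a.2 (-1) ^ e) = 0 := by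
        linear_combination h1 - h2
      exact (mul_eq_zero.mp this).resolve_left hne
    -- iterated shift closure
    have hTiter : ∀ (j : ℕ), ∀ c ∈ C,
        ((cshift lam)^[j] c.1, (cshift lam)^[j] c.2) ∈ C := by
      intro j
      induction j with
      | zero => intro c hc; simpa using hc
      | succ j ih =>
        intro c hc
        have := hT _ (ih c hc)
        simpa [Function.iterate_succ_apply'] using this
    -- step C
    have hC : ∀ c ∈ C, ∀ a ∈ C, ∀ i i' : Fin n,
        c.1 i * a.1 i' ^ e + c.2 i * a.2 i' ^ e = 0 := by
      intro c hc a ha i i'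
      have hb := hB _ (hTiter (-1 - i).val c hc) _ (hTiter (-1 - i').val a ha)
      simp only [cshift_iter_neg_one lam _ (Fin.is_lt _)] at hb
      rw [Fin.cast_val_eq_self, Fin.cast_val_eq_self] at hb
      have hi : (-1 : Fin n) - (-1 - i) = i := by ring
      have hi' : (-1 : Fin n) - (-1 - i') = i' := by ring
      rwa [hi, hi'] at hb
    -- C contains a nonzero element
    obtain ⟨a, ha, hane⟩ : ∃ a ∈ C, a ≠ 0 := by
      by_contra hcon
      push_neg at hcon
      have hx : ((fun _ => (1 : F), fun _ => (1 : F)) :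
          (Fin n → F) × (Fin n → F)) ∈ C := by
        rw [hmem]
        intro c hc
        rw [hcon c hc]
        simp [gin]
      have := hcon _ hx
      have h0 := congrFun (congrArg Prod.fst this) 0
      simpa using h0
    obtain ⟨i', hi'⟩ : ∃ i', a.1 i' ≠ 0 ∨ a.2 i' ≠ 0 := by
      by_contra hcon
      push_neg at hcon
      apply hane
      ext i
      · exact (hcon i).1
      · exact (hcon i).2
    have hself := hC a ha a ha i' i'
    have h2ne : a.2 i' ≠ 0 := by
      intro h0
      have h1 : a.1 i' * a.1 i' ^ e = 0 := by
        rw [h0] at hself; simpa using hself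
      have h10 : a.1 i' = 0 := by
        rcases mul_eq_zero.mp h1 with hz | hz
        · exact hz
        · exact pow_eq_zero_iff hepos |>.mp hz
      rcases hi' with hcase | hcase
      · exact hcase h10
      · exact hcase h0
    have h1ne : a.1 i' ≠ 0 := by
      intro h0
      have h1 : a.2 i' * a.2 i' ^ e = 0 := by
        rw [h0] at hself; simpa using hself
      have h20 : a.2 i' = 0 := by
        rcases mul_eq_zero.mp h1 with hz | hz
        · exact hz
        · exact pow_eq_zero_iff hepos |>.mp hz
      exact h2ne h20
    have hy' : a.2 i' ^ e ≠ 0 := pow_ne_zero _ h2ne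
    set α : F := -(a.1 i' ^ e) / a.2 i' ^ e with hαdef
    have hαne : α ≠ 0 :=
      div_ne_zero (neg_ne_zero.mpr (pow_ne_zero _ h1ne)) hy'
    have hgraph : ∀ c ∈ C, ∀ i, c.2 i = α * c.1 i := by
      intro c hc i
      have hcc := hC c hc a ha i i'
      rw [hαdef]
      field_simp
      linear_combination hcc
    have hα1 : α ^ (1 + e) = -1 := by
      have ha2 : a.2 i' = α * a.1 i' := hgraph a ha i'
      rw [ha2] at hself
      have hfac : (1 + α ^ (1 + e)) * (a.1 i' * a.1 i' ^ e) = 0 := by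
        linear_combination hself
      have hne : a.1 i' * a.1 i' ^ e ≠ 0 :=
        mul_ne_zero h1ne (pow_ne_zero _ h1ne)
      have h1 : (1 : F) + α ^ (1 + e) = 0 := (mul_eq_zero.mp hfac).resolve_right hne
      linear_combination h1
    refine ⟨α, hαne, hα1, fun z => ⟨fun hz => ?_, fun ⟨u, hu⟩ => ?_⟩⟩
    · refine ⟨z.1, ?_⟩
      have : z.2 = α • z.1 := funext fun i =>
        show z.2 i = α * z.1 i from hgraph z hz i
      rw [Prod.ext_iff]
      exact ⟨rfl, this⟩
    · subst hu
      rw [hmem]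
      intro c hc
      have hc2 : c = (c.1, α • c.1) := by
        rw [Prod.ext_iff]
        exact ⟨rfl, funext fun i => show c.2 i = α * c.1 i from hgraph c hc i⟩
      rw [hc2]
      exact hkey α hα1 c.1 u
  · rintro ⟨α, hαne, hα1, hmem⟩
    constructor
    · intro c hc
      obtain ⟨u, hu⟩ := (hmem c).mp hc
      rw [hmem]
      refine ⟨cshift lam u, ?_⟩
      rw [hu]
      simp only
      rw [cshift_smul]
    · ext z
      simp only [SetLike.mem_coe, Set.mem_setOf_eq]
      constructor
      · intro hz c hc
        obtain ⟨u, hu⟩ := (hmem z).mp hz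
        obtain ⟨v, hv⟩ := (hmem c).mp hc
        rw [hu, hv]
        exact hkey α hα1 v u
      · intro hz
        rw [hmem]
        refine ⟨z.1, ?_⟩
        have hcomp : ∀ i : Fin n, z.1 i ^ e + α * z.2 i ^ e = 0 := by
          intro i
          have hvc : ((Pi.single i 1 : Fin n → F), α • (Pi.single i 1 : Fin n → F)) ∈ C := by
            rw [hmem]; exact ⟨Pi.single i 1, rfl⟩
          have := hz _ hvc
          simp only [gin] at this
          rw [Finset.sum_eq_single i, Finset.sum_eq_single i] at this
          · simp only [Pi.single_eq_same, Pi.smul_apply, smul_eq_mul, mul_one, one_mul] at this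
            exact this
          · intro b _ hb
            simp [Pi.single_eq_of_ne hb]
          · intro hb; exact absurd (Finset.mem_univ i) hb
          · intro b _ hb
            simp [Pi.single_eq_of_ne hb]
          · intro hb; exact absurd (Finset.mem_univ i) hb
        have : z.2 = α • z.1 := by
          funext i
          apply hinj
          have hc := hcomp i
          rw [Pi.smul_apply, smul_eq_mul, mul_pow]
          have hαe : α ^ e * z.1 i ^ e = α ^ e * (-α * z.2 i ^ e) := by
            rw [show -α * z.2 i ^ e = z.1 i ^ e by linear_combination -hc]
          rw [hαe]
          have : α ^ e * (-α * z.2 i ^ e) = -(α ^ (1 + e)) * z.2 i ^ e := by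
            rw [pow_add, pow_one]; ring
          rw [this, hα1]
          ring
        rw [Prod.ext_iff]
        exact ⟨rfl, this⟩
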